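/- Let Z₁, …, Z_d be i.i.d. with density q satisfying Assumptions 3 and 4 of the paper, μ_d = c/√d (c ≠ 0), and x̃_i^{(d)} = log(q(Z_i)/q(Z_i + 2μ_d)). If k_d < d^{1/2 − ε} for some ε > 0, then k_d · max_{1≤i≤d} |x̃_i^{(d)}| → 0 in probability as d → ∞. -/

import Mathlib

open MeasureTheory Filter

section AuxLemmas
open Real Set


lemma S_lsc_measurable (g : ℝ → ℝ) (hg : Continuous g) (ζ : ℝ) (hζ : 0 < ζ) :
    Measurable (fun z => sSup ((fun t => |g t|) '' Set.Icc (z - ζ) (z + ζ))) := by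
  apply LowerSemicontinuous.measurable
  intro z₀ c hc
  have hne : ((fun t => |g t|) '' Set.Icc (z₀ - ζ) (z₀ + ζ)).Nonempty :=
    (Set.nonempty_Icc.mpr (by linarith)).image _
  obtain ⟨y, hy, hcy⟩ := exists_lt_of_lt_csSup hne hc
  obtain ⟨t, ht, rfl⟩ := hy
  have hcont : ContinuousAt (fun z => |g (t + (z - z₀))|) z₀ :=
    ((hg.comp (by continuity : Continuous fun z : ℝ => t + (z - z₀))).abs).continuousAt
  have h0 : (fun z => |g (t + (z - z₀))|) z₀ = |g t| := by simp
  have hev : ∀ᶠ z in nhds z₀, c < |g (t + (z - z₀))| := by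
    have := hcont.eventually (p := fun x => c < x) ?_
    · exact this
    · rw [h0]; exact eventually_gt_nhds hcy
  filter_upwards [hev] with z hz
  refine lt_of_lt_of_le hz (le_csSup ?_ ?_)
  · exact (isCompact_Icc.image hg.abs).bddAbove
  · exact Set.mem_image_of_mem _ ⟨by linarith [ht.1], by linarith [ht.2]⟩

lemma taylor_aux (f : ℝ → ℝ) (hfd : Differentiable ℝ f)
    (hf'd : Differentiable ℝ (deriv f)) (ζ : ℝ) (hζ : 0 < ζ)
    (z h : ℝ) (hh : |h| ≤ ζ)
    (hbdd' : BddAbove ((fun t => |deriv (deriv f) t|) '' Set.Icc (z - ζ) (z + ζ))) :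
    |f (z + h) - f z - h * deriv f z| ≤
      h ^ 2 * sSup ((fun t => |deriv (deriv f) t|) '' Set.Icc (z - ζ) (z + ζ)) := by
  set S := sSup ((fun t => |deriv (deriv f) t|) '' Set.Icc (z - ζ) (z + ζ)) with hS
  have hle : ∀ t ∈ Set.Icc (z - ζ) (z + ζ), |deriv (deriv f) t| ≤ S :=
    fun t ht => le_csSup hbdd' (Set.mem_image_of_mem _ ht)
  have hzmem : z ∈ Set.Icc (z - ζ) (z + ζ) := ⟨by linarith, by linarith⟩
  have hS0 : 0 ≤ S := le_trans (abs_nonneg _) (hle z hzmem)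
  have hmin : z - |h| ≤ min z (z + h) :=
    le_min (by linarith [abs_nonneg h]) (by linarith [neg_abs_le h])
  have hmax : max z (z + h) ≤ z + |h| :=
    max_le (by linarith [abs_nonneg h]) (by linarith [le_abs_self h])
  have hsub : Set.Icc (min z (z + h)) (max z (z + h)) ⊆ Set.Icc (z - ζ) (z + ζ) := by
    intro x hx
    exact ⟨by linarith [hx.1], by linarith [hx.2]⟩
  have step1 : ∀ t ∈ Set.Icc (z - ζ) (z + ζ), |deriv f t - deriv f z| ≤ S * |t - z| := by
    intro t ht
    have := Convex.norm_image_sub_le_of_norm_deriv_le (f := deriv f)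
      (fun x _ => hf'd x) (fun x hx => hle x hx) (convex_Icc _ _) hzmem ht
    simpa [Real.norm_eq_abs] using this
  set g : ℝ → ℝ := fun t => f t - t * deriv f z with hg
  have hgd : ∀ x : ℝ, HasDerivAt g (deriv f x - deriv f z) x :=
    fun x => ((hfd x).hasDerivAt.sub (hasDerivAt_mul_const (deriv f z)))
  have hmem1 : z ∈ Set.Icc (min z (z + h)) (max z (z + h)) :=
    ⟨min_le_left _ _, le_max_left _ _⟩
  have hmem2 : z + h ∈ Set.Icc (min z (z + h)) (max z (z + h)) :=
    ⟨min_le_right _ _, le_max_right _ _⟩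
  have bound : ∀ x ∈ Set.Icc (min z (z + h)) (max z (z + h)),
      ‖deriv f x - deriv f z‖ ≤ S * |h| := by
    intro x hx
    have h1 := step1 x (hsub hx)
    have h2 : |x - z| ≤ |h| := abs_le.mpr ⟨by linarith [hx.1], by linarith [hx.2]⟩
    rw [Real.norm_eq_abs]
    exact h1.trans (mul_le_mul_of_nonneg_left h2 hS0)
  have key := Convex.norm_image_sub_le_of_norm_hasDerivWithin_le
    (f := g) (f' := fun x => deriv f x - deriv f z)
    (fun x hx => (hgd x).hasDerivWithinAt) bound (convex_Icc _ _) hmem1 hmem2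
  have key2 : |g (z + h) - g z| ≤ S * |h| * |h| := by
    have : ‖z + h - z‖ = |h| := by rw [Real.norm_eq_abs]; ring_nf
    rw [Real.norm_eq_abs, this] at key
    exact key
  have hgeq : g (z + h) - g z = f (z + h) - f z - h * deriv f z := by
    simp only [hg]; ring
  rw [hgeq] at key2
  calc |f (z + h) - f z - h * deriv f z| ≤ S * |h| * |h| := key2
    _ = h ^ 2 * S := by rw [mul_assoc, abs_mul_abs_self]; ring

end AuxLemmas

/-- Let `Z₁, …, Z_d` be i.i.d. with density `q` satisfying Assumptions 3
(second-derivative square moment) and 4 (max-score logarithmic growth) of the paper,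
with `μ_d = c/√d` (`c ≠ 0`), and set `x̃ᵢ⁽ᵈ⁾ = log(q(Zᵢ)/q(Zᵢ + 2μ_d))`. If
`k_d < d^{1/2-ε}` for some `ε > 0`, then `k_d · maxᵢ |x̃ᵢ⁽ᵈ⁾| → 0` in probability. -/
theorem kd_max_loglik_tendsto_zero (q : ℝ → ℝ) (hpos : ∀ z, 0 < q z)
    (hsmooth : ContDiff ℝ 2 q)
    (hprob : ∫ z : ℝ, q z = 1)
    (ζ : ℝ) (hζ : 0 < ζ)
    -- Assumption 3 (second-derivative square moment)
    (hmom2 : Integrable (fun z : ℝ =>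
      (sSup ((fun t => |deriv (deriv (fun s => Real.log (q s))) t|)
        '' Set.Icc (z - ζ) (z + ζ))) ^ 2 * q z))
    (c : ℝ) (hc : c ≠ 0)
    {Ω : Type*} [MeasurableSpace Ω] (P : Measure Ω) [IsProbabilityMeasure P]
    (Z : ℕ → Ω → ℝ)
    (hindep : ProbabilityTheory.iIndepFun Z P)
    (hdist : ∀ i, Measure.map (Z i) P = volume.withDensity (fun z => ENNReal.ofReal (q z)))
    -- Assumption 4 (max-score logarithmic growth)
    (hmaxscore : ∃ γ > (0 : ℝ), ∃ C₄ > (0 : ℝ), Tendsto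
      (fun d : ℕ => P {ω | ∃ i < d,
        C₄ * (Real.log d) ^ γ < |deriv (fun s => Real.log (q s)) (Z i ω)|})
      atTop (nhds 0))
    -- adversary's budget
    (k : ℕ → ℕ) (ε : ℝ) (hε : 0 < ε)
    (hk : ∀ d : ℕ, 0 < d → (k d : ℝ) < (d : ℝ) ^ ((1 : ℝ) / 2 - ε)) :
    ∀ η > (0 : ℝ), Tendsto
      (fun d : ℕ => P {ω | η ≤ (k d : ℝ) *
        ⨆ i : Fin d, |Real.log (q (Z i.val ω) / q (Z i.val ω + 2 * (c / Real.sqrt d)))|})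
      atTop (nhds 0) := by
  intro η hη
  obtain ⟨γ, hγ, C₄, hC₄, hA⟩ := hmaxscore
  set f : ℝ → ℝ := fun s => Real.log (q s) with hfdef
  -- smoothness facts
  have hfC2 : ContDiff ℝ 2 f := hsmooth.log (fun x => (hpos x).ne')
  have hfd : Differentiable ℝ f := hfC2.differentiable (by norm_num)
  have hf1 : ContDiff ℝ 1 (deriv f) := by
    have h2 : (2 : WithTop ℕ∞) = 1 + 1 := by norm_num
    rw [h2] at hfC2
    exact (contDiff_succ_iff_deriv.mp hfC2).2.2
  have hf'd : Differentiable ℝ (deriv f) := (contDiff_one_iff_deriv.mp hf1).1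
  have hf''c : Continuous (deriv (deriv f)) := (contDiff_one_iff_deriv.mp hf1).2
  set S : ℝ → ℝ := fun z =>
    sSup ((fun t => |deriv (deriv f) t|) '' Set.Icc (z - ζ) (z + ζ)) with hSdef
  have hSbdd : ∀ z, BddAbove ((fun t => |deriv (deriv f) t|) '' Set.Icc (z - ζ) (z + ζ)) :=
    fun z => (isCompact_Icc.image hf''c.abs).bddAbove
  have hS0 : ∀ z, 0 ≤ S z := by
    intro z
    refine le_trans (abs_nonneg (deriv (deriv f) z)) (le_csSup (hSbdd z) ?_)
    exact Set.mem_image_of_mem _ ⟨by linarith, by linarith⟩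
  have hSmeas : Measurable S := S_lsc_measurable (deriv (deriv f)) hf''c ζ hζ
  have hmom2' : Integrable (fun z => S z ^ 2 * q z) := hmom2
  -- the reference measure
  set μq : Measure ℝ := volume.withDensity (fun z => ENNReal.ofReal (q z)) with hμq
  have hqmeas : Measurable q := hsmooth.continuous.measurable
  set E : ℝ := ∫ z, S z ^ 2 * q z with hE
  have hE0 : 0 ≤ E := integral_nonneg (fun z => mul_nonneg (sq_nonneg _) (hpos z).le)
  have hlin : ∫⁻ z, ENNReal.ofReal (S z ^ 2) ∂μq = ENNReal.ofReal E := by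
    rw [hμq, lintegral_withDensity_eq_lintegral_mul _ hqmeas.ennreal_ofReal
      ((hSmeas.pow_const 2).ennreal_ofReal)]
    have h1 : ENNReal.ofReal E = ∫⁻ z, ENNReal.ofReal (S z ^ 2 * q z) :=
      MeasureTheory.ofReal_integral_eq_lintegral_ofReal hmom2'
        (Filter.Eventually.of_forall (fun z => mul_nonneg (sq_nonneg _) (hpos z).le))
    rw [h1]
    apply lintegral_congr
    intro z
    simp only [Pi.mul_apply]
    rw [← ENNReal.ofReal_mul (hpos z).le, mul_comm]
  -- Z i is a.e. measurable
  have hqint : Integrable q := by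
    by_contra h
    rw [integral_undef h] at hprob
    norm_num at hprob
  have hZmeas : ∀ i, AEMeasurable (Z i) P := by
    intro i
    by_contra hcon
    have h0 : Measure.map (Z i) P = 0 := Measure.map_of_not_aemeasurable hcon
    rw [hdist i] at h0
    have h1 : μq Set.univ = 0 := by rw [h0]; rfl
    rw [hμq, withDensity_apply _ MeasurableSet.univ, setLIntegral_univ,
      ← MeasureTheory.ofReal_integral_eq_lintegral_ofReal hqint
        (Filter.Eventually.of_forall (fun z => (hpos z).le)), hprob] at h1
    norm_num at h1
  -- Markov / Chebyshev bound
  have hMark : ∀ (i : ℕ) (τ : ℝ), 0 < τ →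
      P {ω | τ ≤ S (Z i ω)} ≤ ENNReal.ofReal (E / τ ^ 2) := by
    intro i τ hτ
    have hAset : MeasurableSet {z : ℝ | τ ≤ S z} := measurableSet_le measurable_const hSmeas
    have h1 : {ω | τ ≤ S (Z i ω)} = Z i ⁻¹' {z | τ ≤ S z} := rfl
    rw [h1, ← Measure.map_apply_of_aemeasurable (hZmeas i) hAset, hdist i]
    have h2 : {z : ℝ | τ ≤ S z} ⊆ {z : ℝ | ENNReal.ofReal (τ ^ 2) ≤ ENNReal.ofReal (S z ^ 2)} := by
      intro z hz
      exact ENNReal.ofReal_le_ofReal (pow_le_pow_left₀ hτ.le hz 2)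
    refine le_trans (measure_mono h2) ?_
    have h3 := meas_ge_le_lintegral_div (μ := μq)
      (f := fun z => ENNReal.ofReal (S z ^ 2))
      ((hSmeas.pow_const 2).ennreal_ofReal).aemeasurable
      (ε := ENNReal.ofReal (τ ^ 2))
      (by simp [ENNReal.ofReal_eq_zero, not_le]; positivity) ENNReal.ofReal_ne_top
    rw [hlin] at h3
    refine le_trans h3 ?_
    rw [ENNReal.ofReal_div_of_pos (by positivity)]
  -- threshold sequence
  set τ : ℕ → ℝ := fun d => η * (d:ℝ) ^ ((1:ℝ)/2 + ε) / (8 * c ^ 2) with hτdef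
  have hc2 : (0:ℝ) < c ^ 2 := pow_two_pos_of_ne_zero hc
  have hτpos : ∀ d : ℕ, 1 ≤ d → 0 < τ d := by
    intro d hd
    have hD : (0:ℝ) < d := by exact_mod_cast hd
    have hr := Real.rpow_pos_of_pos hD ((1:ℝ)/2 + ε)
    simp only [hτdef]
    positivity
  -- union bound on the second-order term
  have hB : ∀ d : ℕ, 1 ≤ d →
      P (⋃ i ∈ Finset.range d, {ω | τ d ≤ S (Z i ω)}) ≤
        ENNReal.ofReal ((64 * c ^ 4 * E / η ^ 2) * (((d:ℝ) ^ (2*ε))⁻¹)) := by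
    intro d hd
    have hD : (0:ℝ) < d := by exact_mod_cast hd
    refine le_trans (measure_biUnion_finset_le _ _) ?_
    have h1 : ∀ i ∈ Finset.range d, P {ω | τ d ≤ S (Z i ω)} ≤ ENNReal.ofReal (E / τ d ^ 2) :=
      fun i _ => hMark i (τ d) (hτpos d hd)
    refine le_trans (Finset.sum_le_sum h1) ?_
    rw [Finset.sum_const, Finset.card_range, nsmul_eq_mul]
    have h2 : ((d:ℕ) : ENNReal) * ENNReal.ofReal (E / τ d ^ 2)
        = ENNReal.ofReal ((d:ℝ) * (E / τ d ^ 2)) := by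
      rw [ENNReal.ofReal_mul (by positivity)]
      congr 1
      exact (ENNReal.ofReal_natCast d).symm
    rw [h2]
    apply ENNReal.ofReal_le_ofReal
    have hP2 : (0:ℝ) < (d:ℝ) ^ (2*ε) := Real.rpow_pos_of_pos hD _
    have hτsq : τ d ^ 2 = η ^ 2 * ((d:ℝ) * ((d:ℝ) ^ (2*ε))) / (64 * c ^ 4) := by
      simp only [hτdef]
      have h3 : ((d:ℝ) ^ ((1:ℝ)/2 + ε)) ^ 2 = (d:ℝ) ^ (((1:ℝ)/2 + ε) * 2) := by
        rw [← Real.rpow_natCast ((d:ℝ) ^ ((1:ℝ)/2 + ε)) 2, ← Real.rpow_mul hD.le]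
        norm_num
      have h5 : (d:ℝ) ^ (((1:ℝ)/2 + ε) * 2) = (d:ℝ) * (d:ℝ) ^ (2*ε) := by
        rw [show ((1:ℝ)/2 + ε) * 2 = 1 + 2*ε by ring, Real.rpow_add hD, Real.rpow_one]
      rw [div_pow, mul_pow, h3, h5]
      ring
    rw [hτsq]
    apply le_of_eq
    have hη' : η ≠ 0 := hη.ne'
    have hD' : (d:ℝ) ≠ 0 := hD.ne'
    have hP2' : ((d:ℝ) ^ (2*ε)) ≠ 0 := hP2.ne'
    have hc2' : (c:ℝ) ^ 2 ≠ 0 := hc2.ne'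
    field_simp
  -- the upper bound sequence tends to zero
  have hbound0 : Tendsto (fun d : ℕ => (64 * c ^ 4 * E / η ^ 2) * (((d:ℝ) ^ (2*ε))⁻¹))
      atTop (nhds 0) := by
    have h1 : Tendsto (fun d : ℕ => ((d:ℝ) ^ (2*ε))) atTop atTop :=
      (tendsto_rpow_atTop (by positivity)).comp tendsto_natCast_atTop_atTop
    have h2 := h1.inv_tendsto_atTop
    have h3 := h2.const_mul (64 * c ^ 4 * E / η ^ 2)
    simpa using h3
  -- eventual smallness of the first-order term
  have hsmall : ∀ᶠ d : ℕ in atTop,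
      (k d : ℝ) * (2 * |c| / Real.sqrt d) * (C₄ * (Real.log d) ^ γ) < η / 2 := by
    have htend : Tendsto (fun d : ℕ => (2 * |c| * C₄) * ((Real.log d) ^ γ / (d:ℝ) ^ ε))
        atTop (nhds 0) := by
      have h1 : Tendsto (fun x : ℝ => (Real.log x) ^ γ / x ^ ε) atTop (nhds 0) :=
        (isLittleO_log_rpow_rpow_atTop γ hε).tendsto_div_nhds_zero
      have h2 := (h1.comp tendsto_natCast_atTop_atTop).const_mul (2 * |c| * C₄)
      simpa using h2
    have hev := htend.eventually (eventually_lt_nhds (by positivity : (0:ℝ) < η / 2))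
    filter_upwards [hev, eventually_ge_atTop 1] with d hd1 hd2
    have hD : (0:ℝ) < d := by exact_mod_cast hd2
    have hlog : (0:ℝ) ≤ Real.log d := Real.log_nonneg (by exact_mod_cast hd2)
    have hLγ : (0:ℝ) ≤ (Real.log d) ^ γ := Real.rpow_nonneg hlog γ
    refine lt_of_le_of_lt ?_ hd1
    have hsq : Real.sqrt (d:ℝ) = (d:ℝ) ^ ((1:ℝ)/2) := by
      rw [Real.sqrt_eq_rpow]
    have hk' := (hk d (by exact_mod_cast hd2)).le
    have hdiv : (d:ℝ) ^ ((1:ℝ)/2 - ε) / (d:ℝ) ^ ((1:ℝ)/2) = ((d:ℝ) ^ ε)⁻¹ := by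
      rw [← Real.rpow_sub hD, show (1:ℝ)/2 - ε - (1:ℝ)/2 = -ε by ring, Real.rpow_neg hD.le]
    calc (k d : ℝ) * (2 * |c| / Real.sqrt ↑d) * (C₄ * Real.log ↑d ^ γ)
        = (2 * |c| * C₄) * (Real.log ↑d ^ γ) * ((k d : ℝ) / Real.sqrt ↑d) := by ring
      _ ≤ (2 * |c| * C₄) * (Real.log ↑d ^ γ)
          * ((d:ℝ) ^ ((1:ℝ)/2 - ε) / (d:ℝ) ^ ((1:ℝ)/2)) := by
          apply mul_le_mul_of_nonneg_left _ (mul_nonneg (by positivity) hLγ)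
          rw [hsq]
          exact (div_le_div_iff_of_pos_right (Real.rpow_pos_of_pos hD _)).mpr hk'
      _ = (2 * |c| * C₄) * ((Real.log d) ^ γ / (d:ℝ) ^ ε) := by
          rw [hdiv]; ring
  -- eventual smallness of the step compared to ζ
  have hζev : ∀ᶠ d : ℕ in atTop, 2 * |c| / Real.sqrt d ≤ ζ := by
    filter_upwards [eventually_ge_atTop (⌈(2*|c|/ζ)^2⌉₊ + 1)] with d hd
    have h1 : ((2*|c|/ζ)^2 : ℝ) ≤ (d:ℝ) := by
      refine le_trans (Nat.le_ceil _) ?_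
      exact_mod_cast Nat.le_of_succ_le hd
    have h2 : 2*|c|/ζ ≤ Real.sqrt d := by
      rw [show (2*|c|/ζ : ℝ) = Real.sqrt ((2*|c|/ζ)^2) from
        (Real.sqrt_sq (by positivity)).symm]
      exact Real.sqrt_le_sqrt h1
    have hd1 : (1:ℕ) ≤ d := le_trans (Nat.one_le_iff_ne_zero.mpr (by positivity)) hd
    have hD : (0:ℝ) < d := by
      have : (0:ℕ) < d := lt_of_lt_of_le Nat.zero_lt_one hd1
      exact_mod_cast this
    have hsd : 0 < Real.sqrt d := Real.sqrt_pos.mpr hD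
    rw [div_le_iff₀ hsd]
    calc 2*|c| = (2*|c|/ζ) * ζ := by field_simp
      _ ≤ Real.sqrt d * ζ := by
          apply mul_le_mul_of_nonneg_right h2 hζ.le
      _ = ζ * Real.sqrt d := by ring

  -- inclusion of the bad event
  have hincl : ∀ᶠ d : ℕ in atTop,
      P {ω | η ≤ (k d : ℝ) *
        ⨆ i : Fin d, |Real.log (q (Z i.val ω) / q (Z i.val ω + 2 * (c / Real.sqrt d)))|} ≤
      P {ω | ∃ i < d, C₄ * (Real.log d) ^ γ < |deriv f (Z i ω)|}
        + ENNReal.ofReal ((64 * c ^ 4 * E / η ^ 2) * (((d:ℝ) ^ (2*ε))⁻¹)) := by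
    filter_upwards [hsmall, hζev, eventually_ge_atTop 1] with d h1 h2 h3
    have hD : (0:ℝ) < d := by exact_mod_cast h3
    have hd0 : 0 < d := h3
    have hsub : {ω | η ≤ (k d : ℝ) *
        ⨆ i : Fin d, |Real.log (q (Z i.val ω) / q (Z i.val ω + 2 * (c / Real.sqrt d)))|} ⊆
        {ω | ∃ i < d, C₄ * (Real.log d) ^ γ < |deriv f (Z i ω)|}
          ∪ ⋃ i ∈ Finset.range d, {ω | τ d ≤ S (Z i ω)} := by
      intro ω hω
      simp only [Set.mem_setOf_eq] at hω
      by_contra hnot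
      rw [Set.mem_union] at hnot
      push_neg at hnot
      obtain ⟨hnA, hnB⟩ := hnot
      simp only [Set.mem_setOf_eq, not_exists, not_and, not_lt] at hnA
      simp only [Set.mem_iUnion, Set.mem_setOf_eq, Finset.mem_range, not_exists, not_le] at hnB
      have hlog0 : (0:ℝ) ≤ Real.log d := Real.log_nonneg (by exact_mod_cast h3)
      have hL0 : (0:ℝ) ≤ C₄ * (Real.log d) ^ γ :=
        mul_nonneg hC₄.le (Real.rpow_nonneg hlog0 γ)
      have hτ0 := hτpos d h3
      set b : ℝ := 2 * (c / Real.sqrt d) with hb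
      have habs : |b| = 2 * |c| / Real.sqrt d := by
        rw [hb, abs_mul, abs_div, abs_of_nonneg (Real.sqrt_nonneg _)]
        norm_num [mul_div_assoc]
      have hbζ : |b| ≤ ζ := by rw [habs]; exact h2
      have hsqd : Real.sqrt (d:ℝ) ^ 2 = (d:ℝ) := Real.sq_sqrt hD.le
      have hb2 : b ^ 2 = 4 * c ^ 2 / (d:ℝ) := by
        rw [hb, mul_pow, div_pow, hsqd]; ring
      have hM : (⨆ i : Fin d, |Real.log (q (Z i.val ω) / q (Z i.val ω + b))|)
          ≤ 2 * |c| / Real.sqrt d * (C₄ * (Real.log d) ^ γ) + b ^ 2 * τ d := by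
        have : Nonempty (Fin d) := ⟨⟨0, hd0⟩⟩
        apply ciSup_le
        intro i
        set a : ℝ := Z i.val ω with ha
        have hlog : Real.log (q a / q (a + b)) = f a - f (a + b) :=
          Real.log_div (hpos a).ne' (hpos _).ne'
        have htay := taylor_aux f hfd hf'd ζ hζ a b hbζ (hSbdd a)
        have hsplit : |f a - f (a + b)| ≤ |f (a + b) - f a - b * deriv f a|
            + |b| * |deriv f a| := by
          have heq : f a - f (a + b)
              = -(f (a + b) - f a - b * deriv f a) + -(b * deriv f a) := by ring
          rw [heq]
          refine le_trans (abs_add_le _ _) ?_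
          rw [abs_neg, abs_neg, abs_mul]
        rw [hlog]
        refine le_trans hsplit ?_
        have hbnd1 : |f (a + b) - f a - b * deriv f a| ≤ b ^ 2 * τ d :=
          le_trans htay (mul_le_mul_of_nonneg_left (hnB i.val i.isLt).le (sq_nonneg b))
        have hbnd2 : |b| * |deriv f a| ≤ 2 * |c| / Real.sqrt d * (C₄ * (Real.log d) ^ γ) := by
          rw [habs]
          exact mul_le_mul_of_nonneg_left (hnA i.val i.isLt) (by positivity)
        linarith
      have hkn : (0:ℝ) ≤ (k d : ℝ) := Nat.cast_nonneg _
      have hcomb : η ≤ (k d : ℝ) *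
          (2 * |c| / Real.sqrt d * (C₄ * (Real.log d) ^ γ) + b ^ 2 * τ d) :=
        le_trans hω (mul_le_mul_of_nonneg_left hM hkn)
      have hmulpos : (0:ℝ) < 4 * c ^ 2 / (d:ℝ) * τ d := by positivity
      have hDD : (d:ℝ) ^ ((1:ℝ)/2 - ε) * (d:ℝ) ^ ((1:ℝ)/2 + ε) = (d:ℝ) := by
        rw [← Real.rpow_add hD]; norm_num
      have ht2 : (k d : ℝ) * (b ^ 2 * τ d) < η / 2 := by
        rw [hb2, ← mul_assoc]
        calc (k d : ℝ) * (4 * c ^ 2 / (d:ℝ)) * τ d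
            = (k d : ℝ) * (4 * c ^ 2 / (d:ℝ) * τ d) := by ring
          _ < (d:ℝ) ^ ((1:ℝ)/2 - ε) * (4 * c ^ 2 / (d:ℝ) * τ d) :=
              mul_lt_mul_of_pos_right (hk d hd0) hmulpos
          _ = η / 2 := by
              simp only [hτdef]
              rw [show (d:ℝ) ^ ((1:ℝ)/2 - ε)
                    * (4 * c ^ 2 / (d:ℝ) * (η * (d:ℝ) ^ ((1:ℝ)/2 + ε) / (8 * c ^ 2)))
                  = ((d:ℝ) ^ ((1:ℝ)/2 - ε) * (d:ℝ) ^ ((1:ℝ)/2 + ε)) * (4 * c ^ 2 * η)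
                    / ((d:ℝ) * (8 * c ^ 2)) by ring]
              rw [hDD]
              field_simp
              ring
      have ht1 : (k d : ℝ) * (2 * |c| / Real.sqrt d * (C₄ * (Real.log d) ^ γ)) < η / 2 := by
        rw [← mul_assoc]
        exact h1
      have hdistrib : (k d : ℝ) *
          (2 * |c| / Real.sqrt d * (C₄ * (Real.log d) ^ γ) + b ^ 2 * τ d)
          = (k d : ℝ) * (2 * |c| / Real.sqrt d * (C₄ * (Real.log d) ^ γ))
            + (k d : ℝ) * (b ^ 2 * τ d) := by ring
      rw [hdistrib] at hcomb
      linarith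
    refine le_trans (measure_mono hsub) (le_trans (measure_union_le _ _) ?_)
    exact add_le_add le_rfl (hB d h3)
  refine tendsto_of_tendsto_of_tendsto_of_le_of_le' tendsto_const_nhds ?_
    (Filter.Eventually.of_forall (fun d => zero_le)) hincl
  have hsum := Tendsto.add hA (ENNReal.tendsto_ofReal hbound0)
  simpa using hsum
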